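/- Let τ_1 < τ_2 < τ_3 < τ_4 be any four distinct quantile levels in (0,1) (more generally K ≥ 4 distinct levels τ_1 < … < τ_K in (0,1)). If two Tukey lambda parameter vectors θ = (θ_1,θ_2,θ_3) and θ̃ = (θ̃_1,θ̃_2,θ̃_3), with θ_1,θ̃_1 ∈ ℝ, θ_2,θ̃_2 > 0, θ_3,θ̃_3 < 1 and θ_3,θ̃_3 ≠ 0, satisfy Q(τ_k,θ) = Q(τ_k,θ̃) for all k = 1,…,K, then θ = θ̃. -/

import Mathlib

open Real

/-- The Tukey lambda quantile function
`Q(τ,θ) = θ₁ + θ₂ · (τ^θ₃ − (1−τ)^θ₃)/θ₃` for a parameter vector `θ = (θ₁, θ₂, θ₃)`. -/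
noncomputable def tukeyQ (θ : ℝ × ℝ × ℝ) (τ : ℝ) : ℝ :=
  θ.1 + θ.2.1 * ((τ ^ θ.2.2 - (1 - τ) ^ θ.2.2) / θ.2.2)


/-- Core algebraic inequality: for `t ∈ (0,1)` and `a < b < 0`,
`a (t^{a-1} - 1)(t^b + 1) < b (t^{b-1} - 1)(t^a + 1)`. -/
lemma core_ineq {t a b : ℝ} (ht0 : 0 < t) (ht1 : t < 1) (hab : a < b) (hb : b < 0) :
    a * (t ^ (a-1) - 1) * (t ^ b + 1) < b * (t ^ (b-1) - 1) * (t ^ a + 1) := by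
  have ha : a < 0 := hab.trans hb
  have hxa : (1:ℝ) < t ^ a := Real.one_lt_rpow_iff_of_pos ht0 |>.2 (Or.inr ⟨ht1, ha⟩)
  have hxb : (1:ℝ) < t ^ b := Real.one_lt_rpow_iff_of_pos ht0 |>.2 (Or.inr ⟨ht1, hb⟩)
  have hba : t ^ b < t ^ a := Real.rpow_lt_rpow_of_exponent_gt ht0 ht1 hab
  have hsa : t ^ (a-1) = t ^ a / t := by rw [Real.rpow_sub ht0, Real.rpow_one]
  have hsb : t ^ (b-1) = t ^ b / t := by rw [Real.rpow_sub ht0, Real.rpow_one]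
  rw [hsa, hsb]
  set xa := t ^ a
  set xb := t ^ b
  have hP : 0 < (xa / t - 1) * (xb + 1) := by
    have : 1 < xa / t := by
      rw [lt_div_iff₀ ht0]; nlinarith
    nlinarith
  have key : (xb / t - 1) * (xa + 1) < (xa / t - 1) * (xb + 1) := by
    rw [div_sub' ht0.ne', div_sub' ht0.ne', div_mul_eq_mul_div, div_mul_eq_mul_div,
      div_lt_div_iff₀ ht0 ht0]
    nlinarith [mul_pos ht0 (mul_pos (sub_pos.2 hba) (by linarith : (0:ℝ) < 1 + t))]
  calc a * (xa / t - 1) * (xb + 1) = a * ((xa / t - 1) * (xb + 1)) := by ring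
    _ < b * ((xa / t - 1) * (xb + 1)) := by exact mul_lt_mul_of_pos_right hab hP
    _ ≤ b * ((xb / t - 1) * (xa + 1)) := by nlinarith
    _ = b * (xb / t - 1) * (xa + 1) := by ring

/-- Numerator of the derivative of the ratio `u_a/u_b` is negative on `(0, 1/2)`. -/
lemma num_neg {a b x : ℝ} (hab : a < b) (hb : b < 0) (hx0 : 0 < x) (hx : x < 1/2) :
    a * (x ^ (a-1) - (1-x) ^ (a-1)) * (x ^ b + (1-x) ^ b)
      - (x ^ a + (1-x) ^ a) * (b * (x ^ (b-1) - (1-x) ^ (b-1))) < 0 := by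
  set q : ℝ := 1 - x with hq
  have hq0 : 0 < q := by simp only [hq]; linarith
  set t : ℝ := x / q with ht
  have ht0 : 0 < t := div_pos hx0 hq0
  have ht1 : t < 1 := by rw [ht, div_lt_one hq0]; simp only [hq]; linarith
  have hxt : x = t * q := by rw [ht, div_mul_cancel₀ x hq0.ne']
  have hrw : ∀ c : ℝ, x ^ c = t ^ c * q ^ c := fun c => by
    rw [hxt, Real.mul_rpow ht0.le hq0.le]
  rw [hrw, hrw, hrw, hrw]
  have h4 : q ^ a * q ^ (b-1) = q ^ (a-1) * q ^ b := by
    rw [← Real.rpow_add hq0, ← Real.rpow_add hq0]; ring_nf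
  have e1 : a * (t^(a-1)*q^(a-1) - q^(a-1)) * (t^b*q^b + q^b)
      = q^(a-1)*q^b * (a*(t^(a-1)-1)*(t^b+1)) := by ring
  have e2 : (t^a*q^a + q^a) * (b*(t^(b-1)*q^(b-1) - q^(b-1)))
      = q^a*q^(b-1) * (b*(t^(b-1)-1)*(t^a+1)) := by ring
  rw [e1, e2, h4]
  have hP : 0 < q^(a-1)*q^b := mul_pos (Real.rpow_pos_of_pos hq0 _) (Real.rpow_pos_of_pos hq0 _)
  have := mul_lt_mul_of_pos_left (core_ineq ht0 ht1 hab hb) hP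
  linarith

lemma U_pos (c : ℝ) {x : ℝ} (hx0 : 0 < x) (hx1 : x < 1) :
    0 < x ^ c + (1-x) ^ c :=
  add_pos (Real.rpow_pos_of_pos hx0 _) (Real.rpow_pos_of_pos (by linarith) _)

lemma hasDerivAt_U (c : ℝ) {x : ℝ} (hx0 : 0 < x) (hx1 : x < 1) :
    HasDerivAt (fun y : ℝ => y ^ c + (1-y) ^ c)
      (c * x ^ (c-1) + c * (1-x) ^ (c-1) * (-1)) x := by
  have ha := Real.hasDerivAt_rpow_const (x := x) (p := c) (Or.inl hx0.ne')
  have hinner : HasDerivAt (fun y : ℝ => 1 - y) (-1) x := by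
    simpa using (hasDerivAt_id' x).const_sub (1:ℝ)
  have hb := (Real.hasDerivAt_rpow_const (x := 1-x) (p := c)
    (Or.inl (by linarith : (1:ℝ) - x ≠ 0))).comp x hinner
  exact ha.add hb

/-- The ratio `u_a / u_b` is strictly decreasing on `(0, 1/2]` when `a < b < 0`. -/
lemma ratio_anti {a b : ℝ} (hab : a < b) (hb : b < 0) :
    StrictAntiOn (fun x : ℝ => (x ^ a + (1-x) ^ a) / (x ^ b + (1-x) ^ b))
      (Set.Ioc 0 (1/2)) := by
  have hmem : ∀ x ∈ Set.Ioc (0:ℝ) (1/2), 0 < x ∧ x < 1 := fun x hx =>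
    ⟨hx.1, by have := hx.2; linarith⟩
  have hder : ∀ x ∈ Set.Ioo (0:ℝ) (1/2),
      HasDerivAt (fun y : ℝ => (y ^ a + (1-y) ^ a) / (y ^ b + (1-y) ^ b))
        (((a * x ^ (a-1) + a * (1-x) ^ (a-1) * (-1)) * (x ^ b + (1-x) ^ b)
          - (x ^ a + (1-x) ^ a) * (b * x ^ (b-1) + b * (1-x) ^ (b-1) * (-1)))
          / (x ^ b + (1-x) ^ b)^2) x := by
    intro x hx
    have hx0 := hx.1
    have hx1 : x < 1 := by have := hx.2; linarith
    exact (hasDerivAt_U a hx0 hx1).div (hasDerivAt_U b hx0 hx1) (U_pos b hx0 hx1).ne'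
  apply strictAntiOn_of_deriv_neg (convex_Ioc _ _)
  · intro x hx
    obtain ⟨hx0, hx1⟩ := hmem x hx
    exact (((Real.continuousAt_rpow_const _ _ (Or.inl hx0.ne')).add
      ((Real.continuousAt_rpow_const _ _ (Or.inl (by linarith : (1:ℝ)-x ≠ 0))).comp
        (continuous_const.sub continuous_id).continuousAt)).div
      ((Real.continuousAt_rpow_const _ _ (Or.inl hx0.ne')).add
      ((Real.continuousAt_rpow_const _ _ (Or.inl (by linarith : (1:ℝ)-x ≠ 0))).comp
        (continuous_const.sub continuous_id).continuousAt))
      (U_pos b hx0 hx1).ne').continuousWithinAt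
  · intro x hx
    rw [interior_Ioc] at hx
    rw [(hder x hx).deriv]
    obtain ⟨hx0, hx2⟩ := hx
    have hx1 : x < 1 := by linarith
    apply div_neg_of_neg_of_pos
    · have := num_neg hab hb hx0 hx2
      nlinarith [this]
    · exact pow_pos (U_pos b hx0 hx1) 2

lemma ratio_symm (a b x : ℝ) :
    ((1-x) ^ a + (1-(1-x)) ^ a) / ((1-x) ^ b + (1-(1-x)) ^ b)
      = (x ^ a + (1-x) ^ a) / (x ^ b + (1-x) ^ b) := by
  have h : 1 - (1-x) = x := by ring
  rw [h, add_comm ((1-x) ^ a), add_comm ((1-x) ^ b)]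

/-- Three points at which `c1 · u_a = c2 · u_b` with `a < b < 0` give a contradiction. -/
lemma three_points {a b c1 c2 : ℝ} (hab : a < b) (hb : b < 0) (hc1 : 0 < c1)
    {x1 x2 x3 : ℝ} (h10 : 0 < x1) (h12 : x1 < x2) (h23 : x2 < x3) (h31 : x3 < 1)
    (e1 : c1 * (x1 ^ a + (1-x1) ^ a) = c2 * (x1 ^ b + (1-x1) ^ b))
    (e2 : c1 * (x2 ^ a + (1-x2) ^ a) = c2 * (x2 ^ b + (1-x2) ^ b))
    (e3 : c1 * (x3 ^ a + (1-x3) ^ a) = c2 * (x3 ^ b + (1-x3) ^ b)) : False := by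
  have hRval : ∀ x : ℝ, 0 < x → x < 1 →
      c1 * (x ^ a + (1-x) ^ a) = c2 * (x ^ b + (1-x) ^ b) →
      (x ^ a + (1-x) ^ a) / (x ^ b + (1-x) ^ b) = c2 / c1 := by
    intro x hx0 hx1 he
    rw [div_eq_div_iff (U_pos b hx0 hx1).ne' hc1.ne']
    linarith [he]
  have hx20 : 0 < x2 := h10.trans h12
  have hx21 : x2 < 1 := h23.trans h31
  have hx11 : x1 < 1 := h12.trans hx21
  have hx30 : 0 < x3 := hx20.trans h23
  have r1 := hRval x1 h10 hx11 e1
  have r2 := hRval x2 hx20 hx21 e2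
  have r3 := hRval x3 hx30 h31 e3
  rcases le_or_gt x2 (1/2) with hhalf | hhalf
  · have := ratio_anti hab hb (show x1 ∈ Set.Ioc (0:ℝ) (1/2) from ⟨h10, by linarith⟩)
      (show x2 ∈ Set.Ioc (0:ℝ) (1/2) from ⟨hx20, hhalf⟩) h12
    simp only [r1, r2] at this
    exact lt_irrefl _ this
  · have m2 : 1 - x2 ∈ Set.Ioc (0:ℝ) (1/2) := ⟨by linarith, by linarith⟩
    have m3 : 1 - x3 ∈ Set.Ioc (0:ℝ) (1/2) := ⟨by linarith, by linarith⟩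
    have := ratio_anti hab hb m3 m2 (by linarith)
    simp only [ratio_symm] at this
    simp only [r2, r3] at this
    exact lt_irrefl _ this

lemma hasDerivAt_tukeyQ (θ : ℝ × ℝ × ℝ) (hne : θ.2.2 ≠ 0) {x : ℝ}
    (hx0 : 0 < x) (hx1 : x < 1) :
    HasDerivAt (tukeyQ θ) (θ.2.1 * (x ^ (θ.2.2 - 1) + (1-x) ^ (θ.2.2 - 1))) x := by
  have ha := Real.hasDerivAt_rpow_const (x := x) (p := θ.2.2) (Or.inl hx0.ne')
  have hinner : HasDerivAt (fun y : ℝ => 1 - y) (-1) x := by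
    simpa using (hasDerivAt_id' x).const_sub (1:ℝ)
  have hb := (Real.hasDerivAt_rpow_const (x := 1-x) (p := θ.2.2)
    (Or.inl (by linarith : (1:ℝ) - x ≠ 0))).comp x hinner
  have h := ((((ha.sub hb).div_const θ.2.2).const_mul θ.2.1).const_add θ.1)
  rw [mul_neg_one, sub_neg_eq_add, ← mul_add, mul_div_cancel_left₀ _ hne] at h
  exact h

/-- `K ≥ 4` distinct quantile levels in `(0,1)` identify the Tukey lambda
parameters: if two admissible parameter vectors give the same quantiles at all `K` levels,
they are equal. -/
theorem tukey_identification_four_levels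
    (K : ℕ) (hK : 4 ≤ K) (τ : Fin K → ℝ) (hτmono : StrictMono τ)
    (hτ : ∀ k, τ k ∈ Set.Ioo (0 : ℝ) 1)
    (θ θt : ℝ × ℝ × ℝ)
    (hθ2 : 0 < θ.2.1) (hθt2 : 0 < θt.2.1)
    (hθ3lt : θ.2.2 < 1) (hθt3lt : θt.2.2 < 1)
    (hθ3ne : θ.2.2 ≠ 0) (hθt3ne : θt.2.2 ≠ 0)
    (heq : ∀ k, tukeyQ θ (τ k) = tukeyQ θt (τ k)) :
    θ = θt := by
  -- the four points
  have h0K : 0 < K := by omega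
  have h1K : 1 < K := by omega
  have h2K : 2 < K := by omega
  have h3K : 3 < K := by omega
  set t0 := τ ⟨0, h0K⟩
  set t1 := τ ⟨1, h1K⟩
  set t2 := τ ⟨2, h2K⟩
  set t3 := τ ⟨3, h3K⟩
  have ht01 : t0 < t1 := hτmono (by simp [Fin.lt_def])
  have ht12 : t1 < t2 := hτmono (by simp [Fin.lt_def])
  have ht23 : t2 < t3 := hτmono (by simp [Fin.lt_def])
  have ht0 := hτ ⟨0, h0K⟩
  have ht1 := hτ ⟨1, h1K⟩
  have ht2 := hτ ⟨2, h2K⟩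
  have ht3 := hτ ⟨3, h3K⟩
  -- the difference function and its derivative
  set f : ℝ → ℝ := fun x => tukeyQ θ x - tukeyQ θt x with hf
  set f' : ℝ → ℝ := fun x =>
    θ.2.1 * (x ^ (θ.2.2 - 1) + (1-x) ^ (θ.2.2 - 1))
      - θt.2.1 * (x ^ (θt.2.2 - 1) + (1-x) ^ (θt.2.2 - 1)) with hf'
  have hder : ∀ x ∈ Set.Ioo (0:ℝ) 1, HasDerivAt f (f' x) x := fun x hx =>
    (hasDerivAt_tukeyQ θ hθ3ne hx.1 hx.2).sub (hasDerivAt_tukeyQ θt hθt3ne hx.1 hx.2)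
  -- Rolle on three consecutive intervals
  have rolle : ∀ u v : ℝ, u ∈ Set.Ioo (0:ℝ) 1 → v ∈ Set.Ioo (0:ℝ) 1 → u < v →
      f u = 0 → f v = 0 → ∃ c ∈ Set.Ioo u v, f' c = 0 := by
    intro u v hu hv huv hfu hfv
    apply exists_hasDerivAt_eq_zero huv
    · intro x hx
      have hx0 : 0 < x := lt_of_lt_of_le hu.1 hx.1
      have hx1 : x < 1 := lt_of_le_of_lt hx.2 hv.2
      exact (hder x ⟨hx0, hx1⟩).continuousAt.continuousWithinAt
    · rw [hfu, hfv]
    · intro x hx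
      exact hder x ⟨hu.1.trans hx.1, hx.2.trans hv.2⟩
  have hz : ∀ k, f (τ k) = 0 := fun k => by simp [hf, heq k]
  obtain ⟨x1, hx1, hfx1⟩ := rolle t0 t1 ht0 ht1 ht01 (hz _) (hz _)
  obtain ⟨x2, hx2, hfx2⟩ := rolle t1 t2 ht1 ht2 ht12 (hz _) (hz _)
  obtain ⟨x3, hx3, hfx3⟩ := rolle t2 t3 ht2 ht3 ht23 (hz _) (hz _)
  have hx12 : x1 < x2 := hx1.2.trans hx2.1
  have hx23 : x2 < x3 := hx2.2.trans hx3.1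
  have hx10 : 0 < x1 := ht0.1.trans hx1.1
  have hx31 : x3 < 1 := hx3.2.trans ht3.2
  have hx11 : x1 < 1 := by linarith
  have hx20 : 0 < x2 := by linarith
  have hx21 : x2 < 1 := by linarith
  have hx30 : 0 < x3 := by linarith
  -- f' c = 0 means θ₂·u_{θ₃-1}(c) = θ̃₂·u_{θ̃₃-1}(c)
  have e1 : θ.2.1 * (x1 ^ (θ.2.2-1) + (1-x1) ^ (θ.2.2-1))
      = θt.2.1 * (x1 ^ (θt.2.2-1) + (1-x1) ^ (θt.2.2-1)) := by
    have := hfx1; simp only [hf'] at this; linarith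
  have e2 : θ.2.1 * (x2 ^ (θ.2.2-1) + (1-x2) ^ (θ.2.2-1))
      = θt.2.1 * (x2 ^ (θt.2.2-1) + (1-x2) ^ (θt.2.2-1)) := by
    have := hfx2; simp only [hf'] at this; linarith
  have e3 : θ.2.1 * (x3 ^ (θ.2.2-1) + (1-x3) ^ (θ.2.2-1))
      = θt.2.1 * (x3 ^ (θt.2.2-1) + (1-x3) ^ (θt.2.2-1)) := by
    have := hfx3; simp only [hf'] at this; linarith
  -- exponents must coincide
  have hlam : θ.2.2 = θt.2.2 := by
    rcases lt_trichotomy θ.2.2 θt.2.2 with hlt | heqq | hgt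
    · exact (three_points (by linarith : θ.2.2 - 1 < θt.2.2 - 1)
        (by linarith) hθ2 hx10 hx12 hx23 hx31 e1 e2 e3).elim
    · exact heqq
    · exact (three_points (by linarith : θt.2.2 - 1 < θ.2.2 - 1)
        (by linarith) hθt2 hx10 hx12 hx23 hx31 e1.symm e2.symm e3.symm).elim
  -- scales must coincide
  have hscale : θ.2.1 = θt.2.1 := by
    rw [hlam] at e1
    exact mul_right_cancel₀ (U_pos (θt.2.2 - 1) hx10 hx11).ne' e1
  -- locations must coincide
  have hloc : θ.1 = θt.1 := by
    have h := heq ⟨0, h0K⟩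
    simp only [tukeyQ] at h
    rw [hlam, hscale] at h
    linarith [h]
  obtain ⟨a1, a2, a3⟩ := θ
  obtain ⟨b1, b2, b3⟩ := θt
  simp only at hlam hscale hloc
  simp [hlam, hscale, hloc]
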